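/- For every p-family S of subsets of a finite ground set E and every nonnegative integer q, there exists a subfamily Ŝ ⊆ S with |Ŝ| ≤ binom(p+q, p) such that Ŝ is q-representative for S. -/

import Mathlib

open Finset

/-- weight of a set pair. -/
noncomputable def bw (a b : ℕ) : ℚ := (((a + b).choose a : ℚ))⁻¹

lemma choose_add_pos (a b : ℕ) : 0 < (a + b).choose a :=
  Nat.choose_pos (Nat.le_add_right a b)

lemma bw_pos (a b : ℕ) : 0 < bw a b := by
  have := choose_add_pos a b
  simp [bw]; positivity

lemma bw_le_one (a b : ℕ) : bw a b ≤ 1 := by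
  have h := choose_add_pos a b
  rw [bw, inv_le_one_iff₀]
  right
  exact_mod_cast h

/-- key identity: (b+1) * w a b = (a+b+1) * w a (b+1) -/
lemma bw_succ (a b : ℕ) : ((b : ℚ) + 1) * bw a b = ((a : ℚ) + b + 1) * bw a (b + 1) := by
  have h1 : (a + b).choose b = (a + b).choose a := by
    have := Nat.choose_symm (Nat.le_add_right a b) (n := a + b)
    simpa using this
  have h2 : (a + b + 1).choose (b + 1) = (a + b + 1).choose a := by
    have := Nat.choose_symm (Nat.le_add_right a (b + 1)) (n := a + b + 1)
    simpa [Nat.add_assoc] using this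
  have key : (a + b + 1) * (a + b).choose a = (a + b + 1).choose a * (b + 1) := by
    have := Nat.add_one_mul_choose_eq (a + b) b
    rw [h1] at this
    rw [← h2]
    simpa [Nat.succ_eq_add_one] using this
  have hc1 : ((a + b).choose a : ℚ) ≠ 0 := by exact_mod_cast (choose_add_pos a b).ne'
  have hc2 : ((a + b + 1).choose a : ℚ) ≠ 0 := by
    have : 0 < (a + b + 1).choose a := Nat.choose_pos (by omega)
    exact_mod_cast this.ne'
  have keyQ : ((a : ℚ) + b + 1) * ((a + b).choose a : ℚ) = ((a + b + 1).choose a : ℚ) * ((b : ℚ) + 1) := by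
    exact_mod_cast key
  rw [bw, bw]
  have : ((a + (b + 1)).choose a : ℚ) = ((a + b + 1).choose a : ℚ) := by norm_num [Nat.add_assoc]
  rw [this]
  field_simp
  linarith [keyQ]

/-- Bollobás set-pair inequality. -/
lemma bollobas {ι α : Type*} [DecidableEq α] :
    ∀ (n : ℕ) (U : Finset α), U.card = n → ∀ (I : Finset ι) (A B : ι → Finset α),
    (∀ i ∈ I, A i ⊆ U) → (∀ i ∈ I, B i ⊆ U) →
    (∀ i ∈ I, Disjoint (A i) (B i)) →
    (∀ i ∈ I, ∀ j ∈ I, i ≠ j → ¬ Disjoint (A i) (B j)) →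
    ∑ i ∈ I, bw (A i).card (B i).card ≤ 1 := by
  intro n
  induction n using Nat.strong_induction_on with
  | _ n ih =>
    intro U hU I A B hA hB hd hx
    rcases I.eq_empty_or_nonempty with rfl | ⟨i0, hi0⟩
    · simp
    by_cases hBe : ∃ i ∈ I, B i = ∅
    · -- then I = {i}
      obtain ⟨i, hi, hBi⟩ := hBe
      have hsing : I = {i} := by
        apply Finset.eq_singleton_iff_unique_mem.mpr
        refine ⟨hi, fun j hj => ?_⟩
        by_contra hne
        exact hx j hj i hi hne (by simp [hBi])
      rw [hsing]
      simpa using bw_le_one (A i).card (B i).card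
    push_neg at hBe
    -- all B i nonempty, hence U nonempty, n ≥ 1
    have hUne : U.Nonempty := by
      obtain ⟨y, hy⟩ := hBe i0 hi0
      exact ⟨y, hB i0 hi0 hy⟩
    have hn : 0 < n := hU ▸ Finset.card_pos.mpr hUne
    -- averaging over x ∈ U
    have step : ∀ x ∈ U,
        ∑ i ∈ I.filter (fun i => x ∉ A i), bw (A i).card ((B i).erase x).card ≤ 1 := by
      intro x hx'
      refine ih (n - 1) (by omega) (U.erase x) (by rw [Finset.card_erase_of_mem hx', hU])
        _ A (fun i => (B i).erase x) ?_ ?_ ?_ ?_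
      · intro i hi
        simp only [Finset.mem_filter] at hi
        intro a ha
        exact Finset.mem_erase.mpr ⟨fun h => hi.2 (h ▸ ha), hA i hi.1 ha⟩
      · intro i hi
        simp only [Finset.mem_filter] at hi
        intro a ha
        rw [Finset.mem_erase] at ha ⊢
        exact ⟨ha.1, hB i hi.1 ha.2⟩
      · intro i hi
        simp only [Finset.mem_filter] at hi
        exact Finset.disjoint_of_subset_right (Finset.erase_subset _ _) (hd i hi.1)
      · intro i hi j hj hne
        simp only [Finset.mem_filter] at hi hj
        intro hdis
        refine hx i hi.1 j hj.1 hne ?_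
        rw [Finset.disjoint_left] at hdis ⊢
        intro a ha haB
        rcases eq_or_ne a x with rfl | hax
        · exact hi.2 ha
        · exact hdis ha (Finset.mem_erase.mpr ⟨hax, haB⟩)
    -- sum the per-x bounds
    have total : ∑ x ∈ U, ∑ i ∈ I.filter (fun i => x ∉ A i),
        bw (A i).card ((B i).erase x).card ≤ (n : ℚ) := by
      calc ∑ x ∈ U, ∑ i ∈ I.filter (fun i => x ∉ A i), bw (A i).card ((B i).erase x).card
          ≤ ∑ _x ∈ U, (1 : ℚ) := Finset.sum_le_sum step
        _ = (n : ℚ) := by simp [hU]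
    -- compute the LHS as n * Σ w
    have compute : ∑ x ∈ U, ∑ i ∈ I.filter (fun i => x ∉ A i),
        bw (A i).card ((B i).erase x).card
        = (n : ℚ) * ∑ i ∈ I, bw (A i).card (B i).card := by
      have swap : ∑ x ∈ U, ∑ i ∈ I.filter (fun i => x ∉ A i),
          bw (A i).card ((B i).erase x).card
          = ∑ i ∈ I, ∑ x ∈ U \ A i, bw (A i).card ((B i).erase x).card := by
        have h1 : ∀ x ∈ U, ∑ i ∈ I.filter (fun i => x ∉ A i),
            bw (A i).card ((B i).erase x).card
            = ∑ i ∈ I, if x ∉ A i then bw (A i).card ((B i).erase x).card else 0 :=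
          fun x _ => Finset.sum_filter _ _
        rw [Finset.sum_congr rfl h1, Finset.sum_comm]
        apply Finset.sum_congr rfl
        intro i _
        rw [Finset.sdiff_eq_filter, Finset.sum_filter]
      rw [swap, Finset.mul_sum]
      apply Finset.sum_congr rfl
      intro i hi
      -- per-index computation
      have hBsub : B i ⊆ U \ A i :=
        Finset.subset_sdiff.mpr ⟨hB i hi, (hd i hi).symm⟩
      have hsplit := Finset.sum_sdiff (f := fun x => bw (A i).card ((B i).erase x).card) hBsub
      rw [← hsplit]
      have e1 : ∑ x ∈ (U \ A i) \ B i, bw (A i).card ((B i).erase x).card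
          = (((U \ A i) \ B i).card : ℚ) * bw (A i).card (B i).card := by
        rw [Finset.sum_congr rfl (fun x hx' => ?_), Finset.sum_const, nsmul_eq_mul]
        rw [Finset.erase_eq_of_notMem (fun h => (Finset.mem_sdiff.mp hx').2 h)]
      have e2 : ∑ x ∈ B i, bw (A i).card ((B i).erase x).card
          = ((B i).card : ℚ) * bw (A i).card ((B i).card - 1) := by
        rw [Finset.sum_congr rfl (fun x hx' => ?_), Finset.sum_const, nsmul_eq_mul]
        rw [Finset.card_erase_of_mem hx']
      rw [e1, e2]
      -- cardinalities
      have haU : (A i).card ≤ n := hU ▸ Finset.card_le_card (hA i hi)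
      have hbU : (B i).card ≤ n - (A i).card := by
        have := Finset.card_le_card hBsub
        rwa [Finset.card_sdiff_of_subset (hA i hi), hU] at this
      have hcard : ((U \ A i) \ B i).card = n - (A i).card - (B i).card := by
        rw [Finset.card_sdiff_of_subset hBsub, Finset.card_sdiff_of_subset (hA i hi), hU]
      rw [hcard]
      obtain ⟨c, hc⟩ : ∃ c, (B i).card = c + 1 := by
        have : (B i).card ≠ 0 := by
          exact (Finset.card_pos.mpr (hBe i hi)).ne'
        exact ⟨(B i).card - 1, by omega⟩
      have key := bw_succ (A i).card c
      rw [hc]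
      have hcast : ((n - (A i).card - (c + 1) : ℕ) : ℚ)
          = (n : ℚ) - (A i).card - (c + 1) := by
        have : (A i).card + (c + 1) ≤ n := by omega
        push_cast [Nat.sub_sub, Nat.cast_sub this]
        ring
      rw [hcast]
      simp only [Nat.add_sub_cancel]
      push_cast
      nlinarith [key]
    rw [compute] at total
    have hnQ : (0 : ℚ) < n := by exact_mod_cast hn
    nlinarith [total, hnQ]

/-- `S` is a `p`-family: every member has cardinality `p`. -/
def IsPFamily {α : Type*} (p : ℕ) (S : Finset (Finset α)) : Prop :=
  ∀ X ∈ S, X.card = p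

/-- `Shat` is a `q`-representative subfamily of `S`. -/
def IsRepFor {α : Type*} (q : ℕ) (Shat S : Finset (Finset α)) : Prop :=
  Shat ⊆ S ∧ ∀ Y : Finset α, Y.card ≤ q →
    (∃ X ∈ S, Disjoint X Y) → ∃ Xhat ∈ Shat, Disjoint Xhat Y

/-- Every `p`-family over a finite ground set has a `q`-representative subfamily of
size at most `binom(p+q, p)`. -/
theorem exists_small_rep {α : Type*} [Fintype α] [DecidableEq α] (p q : ℕ)
    (S : Finset (Finset α)) (hS : IsPFamily p S) :
    ∃ Shat : Finset (Finset α), Shat ⊆ S ∧ Shat.card ≤ (p + q).choose p ∧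
      IsRepFor q Shat S := by
  classical
  -- take a representative family of minimum cardinality
  set 𝒯 : Finset (Finset (Finset α)) :=
    (S.powerset).filter (fun T => IsRepFor q T S) with h𝒯
  have hSmem : S ∈ 𝒯 := by
    rw [h𝒯, Finset.mem_filter]
    exact ⟨Finset.mem_powerset_self S, subset_rfl, fun Y _ h => h⟩
  obtain ⟨Shat, hShat, hmin⟩ := Finset.exists_min_image 𝒯 Finset.card ⟨S, hSmem⟩
  rw [h𝒯, Finset.mem_filter, Finset.mem_powerset] at hShat
  obtain ⟨hsub, hrep⟩ := hShat
  refine ⟨Shat, hsub, ?_, hrep⟩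
  -- minimality gives, for each X ∈ Shat, a witness Y
  have hwit : ∀ X : Finset α, ∃ Y : Finset α, X ∈ Shat →
      Y.card ≤ q ∧ Disjoint X Y ∧ ∀ X' ∈ Shat, X' ≠ X → ¬ Disjoint X' Y := by
    intro X
    by_cases hX : X ∈ Shat
    · have hnot : ¬ IsRepFor q (Shat.erase X) S := by
        intro hrep'
        have hmem : Shat.erase X ∈ 𝒯 := by
          rw [h𝒯, Finset.mem_filter, Finset.mem_powerset]
          exact ⟨(Finset.erase_subset _ _).trans hsub, hrep'⟩
        have := hmin _ hmem
        have hlt : (Shat.erase X).card < Shat.card := Finset.card_erase_lt_of_mem hX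
        omega
      rw [IsRepFor] at hnot
      push_neg at hnot
      obtain ⟨Y, hYq, hYex, hYnone⟩ := hnot ((Finset.erase_subset _ _).trans hsub)
      obtain ⟨Xhat, hXhat, hXhatd⟩ := hrep.2 Y hYq hYex
      have hXeq : Xhat = X := by
        by_contra hne
        exact hYnone Xhat (Finset.mem_erase.mpr ⟨hne, hXhat⟩) hXhatd
      subst hXeq
      exact ⟨Y, fun _ => ⟨hYq, hXhatd,
        fun X' hX' hne => hYnone X' (Finset.mem_erase.mpr ⟨hne, hX'⟩)⟩⟩
    · exact ⟨∅, fun h => absurd h hX⟩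
  choose Y hY using hwit
  -- apply the Bollobás inequality
  have hbol := bollobas (Fintype.card α) (Finset.univ : Finset α) (by simp)
      Shat (fun X => X) Y (fun i _ => Finset.subset_univ _) (fun i _ => Finset.subset_univ _)
      (fun i hi => (hY i hi).2.1)
      (fun i hi j hj hne => (hY j hj).2.2 i hi hne)
  -- each weight is at least 1 / choose (p+q) p
  have hc : (0 : ℚ) < ((p + q).choose p : ℚ) := by exact_mod_cast choose_add_pos p q
  have hlow : ∀ X ∈ Shat, (((p + q).choose p : ℚ))⁻¹ ≤ bw X.card (Y X).card := by
    intro X hX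
    have hcard : X.card = p := hS X (hsub hX)
    have hle : (X.card + (Y X).card).choose X.card ≤ (p + q).choose p := by
      rw [hcard]
      exact Nat.choose_le_choose p (by have := (hY X hX).1; omega)
    rw [bw]
    have hpos : (0:ℚ) < ((X.card + (Y X).card).choose X.card : ℚ) := by
      exact_mod_cast choose_add_pos X.card (Y X).card
    apply inv_anti₀ hpos
    exact_mod_cast hle
  have hsum : (Shat.card : ℚ) * (((p + q).choose p : ℚ))⁻¹ ≤ 1 := by
    calc (Shat.card : ℚ) * (((p + q).choose p : ℚ))⁻¹
        = ∑ _X ∈ Shat, (((p + q).choose p : ℚ))⁻¹ := by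
          rw [Finset.sum_const, nsmul_eq_mul]
      _ ≤ ∑ X ∈ Shat, bw X.card (Y X).card := Finset.sum_le_sum hlow
      _ ≤ 1 := hbol
  have : (Shat.card : ℚ) ≤ ((p + q).choose p : ℚ) := by
    rw [mul_inv_le_iff₀ hc] at hsum
    linarith
  exact_mod_cast this
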